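/- Let G be a finite simple graph on t vertices such that for every vertex set S with |S| ≤ t/2 one has |N(S)| ≥ |S|, where N(S) denotes the set of vertices outside S adjacent to some vertex of S. Let 0 ≤ γ < 1/2 and let G' be a spanning subgraph of G obtained by deleting at most γ·t edges. Then G' has a connected component containing at least (1 − γ)·t vertices. -/

import Mathlib

/-- If `G` is a graph on `t` vertices in which every vertex set `S` with
`|S| ≤ t/2` satisfies `|N(S)| ≥ |S|`, and `G'` is a spanning subgraph of `G`
obtained by deleting at most `γ·t` edges, where `0 ≤ γ < 1/2`, then `G'` has a
connected component containing at least `(1 - γ)·t` vertices. -/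
theorem large_component_of_expander_after_deletion
    {V : Type*} [Fintype V] [Nonempty V] [DecidableEq V]
    (G : SimpleGraph V) [DecidableRel G.Adj]
    (hexp : ∀ S : Finset V, 2 * S.card ≤ Fintype.card V →
      S.card ≤ (Finset.univ.filter fun v => v ∉ S ∧ ∃ u ∈ S, G.Adj u v).card)
    (γ : ℝ) (hγ0 : 0 ≤ γ) (hγ : γ < 1 / 2)
    (G' : SimpleGraph V) (hsub : G' ≤ G)
    (hdel : ((G.edgeSet \ G'.edgeSet).ncard : ℝ) ≤ γ * Fintype.card V) :
    ∃ c : G'.ConnectedComponent, (1 - γ) * Fintype.card V ≤ (c.supp.ncard : ℝ) := by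
  classical
  set t := Fintype.card V with ht
  set D : Finset (Sym2 V) := (G.edgeSet \ G'.edgeSet).toFinset with hDdef
  have hDcard : ((D.card : ℝ)) ≤ γ * t := by
    have h1 : (G.edgeSet \ G'.edgeSet).ncard = D.card := by
      rw [hDdef, Set.ncard_eq_toFinset_card']
    rw [h1] at hdel
    exact hdel
  set Sc : G'.ConnectedComponent → Finset V := fun c =>
    Finset.univ.filter fun v => G'.connectedComponentMk v = c with hSc
  have hmem : ∀ c v, v ∈ Sc c ↔ G'.connectedComponentMk v = c := by
    intro c v; simp [hSc]
  have hsupp : ∀ c : G'.ConnectedComponent, c.supp.ncard = (Sc c).card := by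
    intro c
    rw [Set.ncard_eq_toFinset_card']
    congr 1
    ext v
    simp [SimpleGraph.ConnectedComponent.mem_supp_iff, hSc]
  have hclosed : ∀ (c : G'.ConnectedComponent) (u v : V), G'.Adj u v →
      (u ∈ Sc c ↔ v ∈ Sc c) := by
    intro c u v huv
    have hmk : G'.connectedComponentMk u = G'.connectedComponentMk v :=
      SimpleGraph.ConnectedComponent.eq.2 huv.reachable
    rw [hmem, hmem, hmk]
  -- the cross-counting lemma for a single union of components
  have cross : ∀ A : Finset V, (∀ u v : V, G'.Adj u v → (u ∈ A ↔ v ∈ A)) →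
      (Finset.univ.filter fun v => v ∉ A ∧ ∃ u ∈ A, G.Adj u v).card ≤ D.card := by
    intro A hA
    apply Finset.card_le_card_of_injOn
      (fun v => if h : ∃ u, u ∈ A ∧ G.Adj u v then s(h.choose, v) else s(v, v))
    · intro v hv
      simp only [Finset.mem_coe, Finset.mem_filter, Finset.mem_univ, true_and] at hv
      obtain ⟨hvA, u, huA, hadj⟩ := hv
      have h : ∃ u, u ∈ A ∧ G.Adj u v := ⟨u, huA, hadj⟩
      simp only [Finset.mem_coe, dif_pos h]
      have hu := h.choose_spec
      simp only [Finset.mem_coe, hDdef, Set.mem_toFinset, Set.mem_diff, SimpleGraph.mem_edgeSet]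
      exact ⟨hu.2, fun hG' => hvA ((hA _ _ hG').1 hu.1)⟩
    · intro v₁ h₁ v₂ h₂ heq
      simp only [Finset.coe_filter, Set.mem_setOf_eq, Finset.mem_univ, true_and] at h₁ h₂
      obtain ⟨hv₁, u₁, hu₁, ha₁⟩ := h₁
      obtain ⟨hv₂, u₂, hu₂, ha₂⟩ := h₂
      have e₁ : ∃ u, u ∈ A ∧ G.Adj u v₁ := ⟨u₁, hu₁, ha₁⟩
      have e₂ : ∃ u, u ∈ A ∧ G.Adj u v₂ := ⟨u₂, hu₂, ha₂⟩
      simp only [dif_pos e₁, dif_pos e₂, Sym2.eq_iff] at heq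
      rcases heq with ⟨-, h⟩ | ⟨h, h'⟩
      · exact h
      · exact absurd (h' ▸ e₂.choose_spec.1) hv₁
  by_cases hbig : ∃ c : G'.ConnectedComponent, t < 2 * (Sc c).card
  · -- a big component exists : it is the desired one
    obtain ⟨c, hc⟩ := hbig
    refine ⟨c, ?_⟩
    set A : Finset V := (Sc c)ᶜ with hA
    have hAclosed : ∀ u v : V, G'.Adj u v → (u ∈ A ↔ v ∈ A) := by
      intro u v huv
      simp only [hA, Finset.mem_compl]
      rw [hclosed c u v huv]
    have hAcard : (Sc c).card + A.card = t := Finset.card_add_card_compl _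
    have h2A : 2 * A.card ≤ t := by omega
    have hAD : (A.card : ℝ) ≤ D.card :=
      Nat.cast_le.2 (le_trans (hexp A h2A) (cross A hAclosed))
    rw [hsupp c]
    have hAcard' : ((Sc c).card : ℝ) + A.card = t := by exact_mod_cast hAcard
    nlinarith [hDcard]
  · -- all components small : contradiction
    exfalso
    push_neg at hbig
    set Nc : G'.ConnectedComponent → Finset V := fun c =>
      Finset.univ.filter fun v => v ∉ Sc c ∧ ∃ u ∈ Sc c, G.Adj u v with hNc
    have hle : ∀ c, (Sc c).card ≤ (Nc c).card := fun c => hexp (Sc c) (hbig c)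
    have htsum : ∑ c : G'.ConnectedComponent, (Sc c).card = t := by
      rw [ht, ← Finset.card_univ]
      rw [Finset.card_eq_sum_card_fiberwise
        (f := fun v => G'.connectedComponentMk v) (t := Finset.univ)
        (fun _ _ => Finset.mem_univ _)]
    set s : Finset ((_ : G'.ConnectedComponent) × V) := Finset.univ.sigma Nc with hs
    have hmemNc : ∀ (p : (_ : G'.ConnectedComponent) × V), p ∈ s ↔
        (p.2 ∉ Sc p.1 ∧ ∃ u ∈ Sc p.1, G.Adj u p.2) := by
      intro p
      simp [hs, hNc, Finset.mem_sigma]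
    set Φ : ((_ : G'.ConnectedComponent) × V) → Sym2 V := fun p =>
      if h : ∃ u, u ∈ Sc p.1 ∧ G.Adj u p.2 then s(h.choose, p.2) else s(p.2, p.2) with hΦ
    have hΦspec : ∀ p ∈ s, ∃ u, u ∈ Sc p.1 ∧ G.Adj u p.2 ∧ Φ p = s(u, p.2) := by
      intro p hp
      obtain ⟨hp2, u, hu, ha⟩ := (hmemNc p).1 hp
      have h : ∃ u, u ∈ Sc p.1 ∧ G.Adj u p.2 := ⟨u, hu, ha⟩
      refine ⟨h.choose, h.choose_spec.1, h.choose_spec.2, ?_⟩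
      simp only [hΦ]
      rw [dif_pos h]
    have hmaps : ∀ p ∈ s, Φ p ∈ D := by
      intro p hp
      obtain ⟨u, hu, ha, hval⟩ := hΦspec p hp
      obtain ⟨hp2, -⟩ := (hmemNc p).1 hp
      rw [hval]
      simp only [hDdef, Set.mem_toFinset, Set.mem_diff, SimpleGraph.mem_edgeSet]
      exact ⟨ha, fun hG' => hp2 ((hclosed p.1 _ _ hG').1 hu)⟩
    have hfib : ∀ a ∈ D, (s.filter fun p => Φ p = a).card ≤ 2 := by
      intro a _
      rcases (s.filter fun p => Φ p = a).eq_empty_or_nonempty with he | ⟨p₀, hp₀⟩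
      · simp [he]
      · rw [Finset.mem_filter] at hp₀
        obtain ⟨hp₀s, hp₀a⟩ := hp₀
        obtain ⟨u₀, hu₀, ha₀, hval₀⟩ := hΦspec p₀ hp₀s
        have hsub2 : (s.filter fun p => Φ p = a) ⊆
            {⟨G'.connectedComponentMk u₀, p₀.2⟩, ⟨G'.connectedComponentMk p₀.2, u₀⟩} := by
          intro p hp
          rw [Finset.mem_filter] at hp
          obtain ⟨hps, hpa⟩ := hp
          obtain ⟨u, hu, ha, hval⟩ := hΦspec p hps
          have heq : s(u, p.2) = s(u₀, p₀.2) := by rw [← hval, ← hval₀, hpa, hp₀a]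
          rw [Sym2.eq_iff] at heq
          obtain ⟨c, v⟩ := p
          simp only at hu heq ⊢
          have hc : c = G'.connectedComponentMk u := ((hmem c u).1 hu).symm
          rcases heq with ⟨h1, h2⟩ | ⟨h1, h2⟩
          · rw [Finset.mem_insert]
            left
            rw [hc, h1, h2]
          · rw [Finset.mem_insert, Finset.mem_singleton]
            right
            rw [hc, h1, h2]
        refine le_trans (Finset.card_le_card hsub2) ?_
        refine le_trans (Finset.card_insert_le _ _) ?_
        simp
    have hkey : s.card ≤ 2 * D.card :=
      Finset.card_le_mul_card_image_of_maps_to hmaps 2 hfib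
    have hscard : s.card = ∑ c : G'.ConnectedComponent, (Nc c).card := Finset.card_sigma _ _
    have htle : t ≤ 2 * D.card := by
      calc t = ∑ c : G'.ConnectedComponent, (Sc c).card := htsum.symm
        _ ≤ ∑ c : G'.ConnectedComponent, (Nc c).card := Finset.sum_le_sum fun c _ => hle c
        _ = s.card := hscard.symm
        _ ≤ 2 * D.card := hkey
    have ht1 : (1 : ℝ) ≤ t := by
      have : 0 < t := Fintype.card_pos
      exact_mod_cast this
    have htle' : (t : ℝ) ≤ 2 * D.card := by exact_mod_cast htle
    nlinarith [hDcard]
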